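/- Let p ∈ (1,∞). If 0 < a₁ < a₂, then G_{a₂}(y) < G_{a₁}(y) for every y ∈ (0,1). -/

import Mathlib

open Set Real Filter MeasureTheory

/-- `F_a(y,w)` from the paper (with parameter `p`). -/
noncomputable def Fa (p a y w : ℝ) : ℝ :=
  (8*p*(1/a + 2*y) + (2*p/a + 4*(3*p - 2)*y + 2*(p - 1)*y*w)*w) / (y^2 * (4 + (p - 1)*w))

/-- `G` is the family `a ↦ G_a` of solutions of `G_a' = -F_a(y, G_a)` on `(0,1)`
with `G_a(1) = 0`: each `G_a` is continuous on `(0,1]`, positive on `(0,1)` and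
strictly decreasing on `(0,1]`. -/
def IsGFamily (p : ℝ) (G : ℝ → ℝ → ℝ) : Prop :=
  ∀ a : ℝ, 0 < a →
    ContinuousOn (G a) (Set.Ioc 0 1) ∧
    G a 1 = 0 ∧
    (∀ y ∈ Set.Ioo (0:ℝ) 1, HasDerivAt (G a) (-(Fa p a y (G a y))) y) ∧
    (∀ y ∈ Set.Ioo (0:ℝ) 1, 0 < G a y) ∧
    StrictAntiOn (G a) (Set.Ioc 0 1)


lemma Fa_lt {p a₁ a₂ y w : ℝ} (hp : 1 < p) (ha₁ : 0 < a₁) (ha : a₁ < a₂)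
    (hy : 0 < y) (hw : 0 ≤ w) : Fa p a₂ y w < Fa p a₁ y w := by
  have hp0 : 0 < p := by linarith
  have hden : 0 < y^2 * (4 + (p - 1)*w) := by
    have h1 : 0 ≤ (p - 1) * w := mul_nonneg (by linarith) hw
    have : 0 < 4 + (p - 1)*w := by linarith
    positivity
  unfold Fa
  rw [div_lt_div_iff_of_pos_right hden]
  have hinv : 1/a₂ < 1/a₁ := one_div_lt_one_div_of_lt ha₁ ha
  have hdiff : 0 < 1/a₁ - 1/a₂ := by linarith
  have key : 8*p*(1/a₁ + 2*y) + (2*p/a₁ + 4*(3*p - 2)*y + 2*(p - 1)*y*w)*w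
      - (8*p*(1/a₂ + 2*y) + (2*p/a₂ + 4*(3*p - 2)*y + 2*(p - 1)*y*w)*w)
      = (8*p + 2*p*w) * (1/a₁ - 1/a₂) := by ring
  have hpos : 0 < (8*p + 2*p*w) * (1/a₁ - 1/a₂) :=
    mul_pos (by nlinarith) hdiff
  linarith

lemma Fa_cont {p a : ℝ} (hp : 1 < p) {f : ℝ → ℝ}
    (hf : ContinuousOn f (Set.Ioc 0 1)) (hf0 : ∀ y ∈ Set.Ioc (0:ℝ) 1, 0 ≤ f y) :
    ContinuousOn (fun y => Fa p a y (f y)) (Set.Ioc 0 1) := by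
  unfold Fa
  apply ContinuousOn.div (by fun_prop) (by fun_prop)
  intro y hy
  have h1 : 0 ≤ (p - 1) * f y := mul_nonneg (by linarith) (hf0 y hy)
  have h2 : 0 < 4 + (p - 1) * f y := by linarith
  have := hy.1
  positivity

theorem G_antitone_in_a (p : ℝ) (hp : 1 < p) (G : ℝ → ℝ → ℝ)
    (hG : IsGFamily p G) (a₁ a₂ : ℝ) (ha₁ : 0 < a₁) (ha : a₁ < a₂) :
    ∀ y ∈ Set.Ioo (0:ℝ) 1, G a₂ y < G a₁ y := by
  obtain ⟨hc₁, h01, hd₁, hpos₁, -⟩ := hG a₁ ha₁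
  obtain ⟨hc₂, h02, hd₂, hpos₂, -⟩ := hG a₂ (ha₁.trans ha)
  have hnn₁ : ∀ y ∈ Set.Ioc (0:ℝ) 1, 0 ≤ G a₁ y := by
    intro y hy
    rcases eq_or_lt_of_le hy.2 with h | h
    · rw [h]; exact le_of_eq h01.symm
    · exact (hpos₁ y ⟨hy.1, h⟩).le
  have hnn₂ : ∀ y ∈ Set.Ioc (0:ℝ) 1, 0 ≤ G a₂ y := by
    intro y hy
    rcases eq_or_lt_of_le hy.2 with h | h
    · rw [h]; exact le_of_eq h02.symm
    · exact (hpos₂ y ⟨hy.1, h⟩).le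
  set φ₁ : ℝ → ℝ := fun y => Fa p a₁ y (G a₁ y) with hφ₁def
  set φ₂ : ℝ → ℝ := fun y => Fa p a₂ y (G a₂ y) with hφ₂def
  have hφ₁ : ContinuousOn φ₁ (Set.Ioc 0 1) := Fa_cont hp hc₁ hnn₁
  have hφ₂ : ContinuousOn φ₂ (Set.Ioc 0 1) := Fa_cont hp hc₂ hnn₂
  set h : ℝ → ℝ := fun y => G a₁ y - G a₂ y with hhdef
  have hder : ∀ y ∈ Set.Ioo (0:ℝ) 1, HasDerivAt h (φ₂ y - φ₁ y) y := by
    intro y hy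
    have := (hd₁ y hy).sub (hd₂ y hy)
    refine this.congr_deriv ?_
    show -(Fa p a₁ y (G a₁ y)) - -(Fa p a₂ y (G a₂ y)) = Fa p a₂ y (G a₂ y) - Fa p a₁ y (G a₁ y); ring
  have hcont : ContinuousOn h (Set.Ioc 0 1) := hc₁.sub hc₂
  have h1mem : (1:ℝ) ∈ Set.Ioc (0:ℝ) 1 := right_mem_Ioc.2 one_pos
  have hlt1 : φ₂ 1 - φ₁ 1 < 0 := by
    have := Fa_lt (w := 0) hp ha₁ ha one_pos le_rfl
    simp only [hφ₁def, hφ₂def, h01, h02]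
    linarith
  have hev : ∀ᶠ y in nhdsWithin (1:ℝ) (Set.Ioc 0 1), φ₂ y - φ₁ y < 0 := by
    have ht : Filter.Tendsto (fun y => φ₂ y - φ₁ y) (nhdsWithin (1:ℝ) (Set.Ioc 0 1))
        (nhds (φ₂ 1 - φ₁ 1)) := ((hφ₂ 1 h1mem).sub (hφ₁ 1 h1mem))
    exact ht.eventually_lt_const hlt1
  rw [eventually_nhdsWithin_iff] at hev
  obtain ⟨ε, hε, hball⟩ := Metric.eventually_nhds_iff.mp hev
  intro y₀ hy₀
  by_contra hcon
  push_neg at hcon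
  have hhy₀ : h y₀ ≤ 0 := sub_nonpos.2 hcon
  -- choose b' close to 1
  set b : ℝ := max y₀ (1 - ε) with hbdef
  set b' : ℝ := (b + 1) / 2 with hb'def
  have hb1 : b < 1 := max_lt hy₀.2 (by linarith)
  have hy₀b' : y₀ < b' := by
    have : y₀ ≤ b := le_max_left _ _
    simp only [hb'def]; linarith
  have hb'1 : b' < 1 := by simp only [hb'def]; linarith
  have hb'0 : 0 < b' := hy₀.1.trans hy₀b'
  have hb'ε : 1 - ε < b' := by
    have : 1 - ε ≤ b := le_max_right _ _
    simp only [hb'def]; linarith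
  have hIccsub : Set.Icc b' 1 ⊆ Set.Ioc 0 1 := fun x hx => ⟨hb'0.trans_le hx.1, hx.2⟩
  have hnegband : ∀ y, b' ≤ y → y ≤ 1 → y ∈ Set.Ioc (0:ℝ) 1 → φ₂ y - φ₁ y < 0 := by
    intro y hy1 hy2 hy3
    refine hball ?_ hy3
    rw [Real.dist_eq, abs_lt]
    constructor <;> linarith
  have h1zero : h 1 = 0 := by simp [hhdef, h01, h02]
  have hb'pos : 0 < h b' := by
    obtain ⟨c, hcmem, hceq⟩ := exists_hasDerivAt_eq_slope h (fun y => φ₂ y - φ₁ y) hb'1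
      (hcont.mono hIccsub)
      (fun x hx => hder x ⟨hb'0.trans hx.1, hx.2⟩)
    have hcneg : φ₂ c - φ₁ c < 0 :=
      hnegband c hcmem.1.le hcmem.2.le ⟨hb'0.trans hcmem.1, hcmem.2.le⟩
    rw [hceq, h1zero] at hcneg
    have hpos : 0 < 1 - b' := by linarith
    by_contra hle
    push_neg at hle
    have : 0 ≤ (0 - h b') / (1 - b') := div_nonneg (by linarith) hpos.le
    linarith
  -- the sup of the bad set
  set S : Set ℝ := Set.Icc y₀ b' ∩ h ⁻¹' Set.Iic 0 with hSdef
  have hSsub : Set.Icc y₀ b' ⊆ Set.Ioc 0 1 := fun x hx =>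
    ⟨hy₀.1.trans_le hx.1, hx.2.trans hb'1.le⟩
  have hSclosed : IsClosed S :=
    (hcont.mono hSsub).preimage_isClosed_of_isClosed isClosed_Icc isClosed_Iic
  have hSne : S.Nonempty := ⟨y₀, ⟨le_rfl, hy₀b'.le⟩, hhy₀⟩
  have hSbdd : BddAbove S := BddAbove.mono Set.inter_subset_left bddAbove_Icc
  set y₁ : ℝ := sSup S with hy₁def
  have hy₁S : y₁ ∈ S := hSclosed.csSup_mem hSne hSbdd
  obtain ⟨⟨hy₀y₁, hy₁b'⟩, hy₁le⟩ := hy₁S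
  have hy₁le : h y₁ ≤ 0 := hy₁le
  have hy₁ltb' : y₁ < b' := lt_of_le_of_ne hy₁b' (by intro heq; rw [heq] at hy₁le; linarith)
  have hgt : ∀ y, y₁ < y → y ≤ b' → 0 < h y := by
    intro y hy1 hy2
    by_contra hle
    push_neg at hle
    have hyS : y ∈ S := ⟨⟨hy₀y₁.trans hy1.le, hy2⟩, hle⟩
    exact absurd (le_csSup hSbdd hyS) (not_le.2 hy1)
  have hy₁0 : h y₁ = 0 := by
    rcases lt_or_eq_of_le hy₁le with hlt | heq
    · exfalso
      have hIVT := intermediate_value_Ioo hy₁ltb'.le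
        (hcont.mono (fun x hx => ⟨(hy₀.1.trans_le hy₀y₁).trans_le hx.1, hx.2.trans hb'1.le⟩))
      have h0mem : (0:ℝ) ∈ Set.Ioo (h y₁) (h b') := ⟨hlt, hb'pos⟩
      obtain ⟨c, hcmem, hc0⟩ := hIVT h0mem
      have := hgt c hcmem.1 hcmem.2.le
      rw [hc0] at this; exact lt_irrefl 0 this
    · exact heq
  have hy₁Ioo : y₁ ∈ Set.Ioo (0:ℝ) 1 := ⟨hy₀.1.trans_le hy₀y₁, hy₁ltb'.trans hb'1⟩
  have hweq : G a₁ y₁ = G a₂ y₁ := sub_eq_zero.mp hy₁0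
  have hneg : φ₂ y₁ - φ₁ y₁ < 0 := by
    have := Fa_lt (w := G a₂ y₁) hp ha₁ ha hy₁Ioo.1
      (hnn₂ y₁ ⟨hy₁Ioo.1, hy₁Ioo.2.le⟩)
    simp only [hφ₁def, hφ₂def, hweq]
    linarith
  have hds := (hder y₁ hy₁Ioo).hasDerivWithinAt (s := Set.Ioi y₁)
  rw [hasDerivWithinAt_iff_tendsto_slope] at hds
  rw [Set.diff_singleton_eq_self (by simp)] at hds
  have hev2 : ∀ᶠ y in nhdsWithin y₁ (Set.Ioi y₁), slope h y₁ y < 0 :=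
    hds.eventually_lt_const hneg
  have hmem : Set.Ioo y₁ b' ∈ nhdsWithin y₁ (Set.Ioi y₁) :=
    Ioo_mem_nhdsGT_of_mem ⟨le_rfl, hy₁ltb'⟩
  obtain ⟨y, hylt, hymem⟩ := (hev2.and (Filter.eventually_of_mem hmem (fun x hx => hx))).exists
  have hslope : (h y - h y₁) / (y - y₁) < 0 := by
    rwa [slope_def_field] at hylt
  rw [hy₁0, sub_zero] at hslope
  have hy0lt : 0 < h y := hgt y hymem.1 hymem.2.le
  have hyy₁ : 0 < y - y₁ := by linarith [hymem.1]
  have : 0 < h y / (y - y₁) := div_pos hy0lt hyy₁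
  linarith
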